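/- If f : Fin n → Fin n has a unique cyclic vertex r, then the simple graph G on Fin n with an edge between v and f(v) for every v ≠ r is connected and has exactly n − 1 edges, hence is a tree. -/

import Mathlib

section Aux

variable {n : ℕ} {f : Fin n → Fin n} {r : Fin n}

lemma fg_exists_height (hr : ∃ k, 1 ≤ k ∧ f^[k] r = r)
    (huniq : ∀ v : Fin n, (∃ k, 1 ≤ k ∧ f^[k] v = v) → v = r) (v : Fin n) :
    ∃ k, f^[k] v = r := by
  obtain ⟨i, j, hne, hij⟩ := Finite.exists_ne_map_eq_of_infinite (fun k : ℕ => f^[k] v)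
  wlog hlt : i < j generalizing i j
  · exact this j i hne.symm hij.symm (by omega)
  have hcyc : f^[j - i] (f^[i] v) = f^[i] v := by
    rw [← Function.iterate_add_apply]
    rw [Nat.sub_add_cancel hlt.le]
    exact hij.symm
  have := huniq (f^[i] v) ⟨j - i, by omega, hcyc⟩
  exact ⟨i, this⟩

end Aux

theorem functional_graph_is_tree (n : ℕ) (f : Fin n → Fin n) (r : Fin n)
    (hr : ∃ k, 1 ≤ k ∧ f^[k] r = r)
    (huniq : ∀ v : Fin n, (∃ k, 1 ≤ k ∧ f^[k] v = v) → v = r) :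
    let G : SimpleGraph (Fin n) := SimpleGraph.fromRel (fun v w => v ≠ r ∧ w = f v)
    G.Connected ∧ G.edgeSet.ncard = n - 1 ∧ G.IsTree := by
  intro G
  have hex : ∀ v : Fin n, ∃ k, f^[k] v = r := fg_exists_height hr huniq
  -- height function
  set h : Fin n → ℕ := fun v => Nat.find (hex v) with hh
  have hspec : ∀ v, f^[h v] v = r := fun v => Nat.find_spec (hex v)
  have hzero : ∀ v, h v = 0 ↔ v = r := by
    intro v
    constructor
    · intro h0
      have := hspec v
      rwa [h0, Function.iterate_zero_apply] at this
    · intro hv; subst hv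
      exact Nat.le_zero.mp (Nat.find_le (by simp))
  have hfr : f r = r := by
    obtain ⟨k, hk1, hk⟩ := hr
    refine huniq (f r) ⟨k, hk1, ?_⟩
    rw [← Function.iterate_succ_apply, Function.iterate_succ_apply', hk]
  have hstep : ∀ v : Fin n, v ≠ r → h v = h (f v) + 1 := by
    intro v hv
    have h1 : 1 ≤ h v := by
      rcases Nat.eq_zero_or_pos (h v) with h0 | h0
      · exact absurd ((hzero v).mp h0) hv
      · exact h0
    have hle : h (f v) ≤ h v - 1 := by
      apply Nat.find_le
      have heq : f^[h v - 1] (f v) = f^[h v] v := by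
        rw [← Function.iterate_succ_apply]
        congr 1
        omega
      rw [heq]; exact hspec v
    have hge : h v ≤ h (f v) + 1 := by
      apply Nat.find_le
      rw [Function.iterate_succ_apply]
      exact hspec (f v)
    omega
  have hne_fv : ∀ v : Fin n, v ≠ r → v ≠ f v := by
    intro v hv hfix
    exact hv (huniq v ⟨1, le_refl 1, by simp [← hfix]⟩)
  have hadj_fv : ∀ v : Fin n, v ≠ r → G.Adj v (f v) := by
    intro v hv
    rw [SimpleGraph.fromRel_adj]
    exact ⟨hne_fv v hv, Or.inl ⟨hv, rfl⟩⟩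
  -- key: adjacency with h u ≤ h v forces u = f v
  have hkey : ∀ v u : Fin n, G.Adj v u → h u ≤ h v → v ≠ r ∧ u = f v := by
    intro v u hadj hle
    rw [SimpleGraph.fromRel_adj] at hadj
    obtain ⟨hne, hc | hc⟩ := hadj
    · exact ⟨hc.1, hc.2⟩
    · exfalso
      obtain ⟨hur, hvfu⟩ := hc
      have := hstep u hur
      rw [← hvfu] at this
      omega
  -- Connectedness
  have hreach' : ∀ k (v : Fin n), h v = k → G.Reachable v r := by
    intro k
    induction k using Nat.strong_induction_on with
    | _ k ih =>
      intro v hv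
      by_cases hvr : v = r
      · subst hvr; exact ⟨SimpleGraph.Walk.nil⟩
      · have hs := hstep v hvr
        exact (hadj_fv v hvr).reachable.trans (ih (h (f v)) (by omega) (f v) rfl)
  have hreach : ∀ v : Fin n, G.Reachable v r := fun v => hreach' (h v) v rfl
  have hconn : G.Connected := by
    have : Nonempty (Fin n) := ⟨r⟩
    rw [SimpleGraph.connected_iff]
    exact ⟨fun u v => (hreach u).trans (hreach v).symm, this⟩
  -- Edge set description
  have hedge : G.edgeSet = (fun v => s(v, f v)) '' {v | v ≠ r} := by
    ext e
    induction e with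
    | _ x y =>
      simp only [SimpleGraph.mem_edgeSet, Set.mem_image, Set.mem_setOf_eq]
      constructor
      · intro hadj
        rw [SimpleGraph.fromRel_adj] at hadj
        obtain ⟨hne, hc | hc⟩ := hadj
        · exact ⟨x, hc.1, by rw [hc.2]⟩
        · exact ⟨y, hc.1, by rw [hc.2, Sym2.eq_swap]⟩
      · rintro ⟨v, hv, he⟩
        rw [Sym2.eq_iff] at he
        rcases he with ⟨rfl, rfl⟩ | ⟨h1, h2⟩
        · exact hadj_fv _ hv
        · rw [← h1, ← h2]; exact (hadj_fv v hv).symm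
  have hinj : Set.InjOn (fun v => s(v, f v)) {v | v ≠ r} := by
    intro a ha b hb hab
    simp only [Sym2.eq_iff] at hab
    rcases hab with ⟨rfl, _⟩ | ⟨h1, h2⟩
    · rfl
    · exfalso
      apply ha
      refine huniq a ⟨2, by norm_num, ?_⟩
      have : f (f a) = a := by rw [h2]; exact h1.symm
      simpa [Function.iterate_succ_apply] using this
  have hcard : G.edgeSet.ncard = n - 1 := by
    rw [hedge, Set.ncard_image_of_injOn hinj]
    have : {v : Fin n | v ≠ r} = ↑(Finset.univ.erase r) := by
      ext v; simp
    rw [this, Set.ncard_coe_finset, Finset.card_erase_of_mem (Finset.mem_univ r),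
      Finset.card_univ, Fintype.card_fin]
  -- Acyclicity
  have hacyc : G.IsAcyclic := by
    have main : ∀ (v : Fin n) (c' : G.Walk v v), c'.IsCycle →
        (∀ x ∈ c'.support, h x ≤ h v) → False := by
      intro v c' hc' hsupp
      have hlen : 3 ≤ c'.length := hc'.three_le_length
      cases c' with
      | nil => simp at hlen
      | @cons _ u _ hadj p =>
        have humem : u ∈ (SimpleGraph.Walk.cons hadj p).support := by
          simp [SimpleGraph.Walk.support_cons, p.start_mem_support]
        obtain ⟨hvr, hu⟩ := hkey v u hadj (hsupp u humem)
        cases hq : (SimpleGraph.Walk.cons hadj p).reverse with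
        | nil =>
          have := congrArg SimpleGraph.Walk.length hq
          simp at this
        | @cons _ w _ hadj2 q =>
          have hwmem : w ∈ (SimpleGraph.Walk.cons hadj p).support := by
            have : w ∈ (SimpleGraph.Walk.cons hadj p).reverse.support := by
              rw [hq]; simp [SimpleGraph.Walk.support_cons, q.start_mem_support]
            rwa [SimpleGraph.Walk.support_reverse, List.mem_reverse] at this
          obtain ⟨-, hw⟩ := hkey v w hadj2 (hsupp w hwmem)
          have hedges : (SimpleGraph.Walk.cons hadj p).edges.reverse
              = s(v, f v) :: q.edges := by
            rw [← SimpleGraph.Walk.edges_reverse, hq, SimpleGraph.Walk.edges_cons]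
            exact congrArg (fun e => e :: q.edges) (by rw [hw])
          have hfirst : (SimpleGraph.Walk.cons hadj p).edges = s(v, f v) :: p.edges := by
            rw [SimpleGraph.Walk.edges_cons]
            exact congrArg (fun e => e :: p.edges) (by rw [hu])
          have hnodup : (SimpleGraph.Walk.cons hadj p).edges.Nodup := hc'.edges_nodup
          have hplen : p.edges ≠ [] := by
            intro hnil
            have h0 : p.length = 0 := by
              simpa [SimpleGraph.Walk.length_edges] using congrArg List.length hnil
            simp only [SimpleGraph.Walk.length_cons] at hlen
            omega
          have hlast : (SimpleGraph.Walk.cons hadj p).edges.getLast? = some s(v, f v) := by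
            rw [← List.head?_reverse, hedges]; rfl
          rw [hfirst] at hlast hnodup
          rcases hpe : p.edges with _ | ⟨e, t⟩
          · exact hplen hpe
          · rw [hpe] at hlast hnodup
            rw [List.getLast?_cons_cons] at hlast
            have hmem : s(v, f v) ∈ e :: t := by
              obtain ⟨ys, hys⟩ := List.getLast?_eq_some_iff.mp hlast
              rw [hys]; simp
            exact (List.nodup_cons.mp hnodup).1 hmem
    intro a c hc
    obtain ⟨v, hvmem, hvmax⟩ := c.support.toFinset.exists_max_image h
      ⟨a, by simp [SimpleGraph.Walk.start_mem_support]⟩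
    rw [List.mem_toFinset] at hvmem
    have hvmax' : ∀ x ∈ c.support, h x ≤ h v := fun x hx =>
      hvmax x (List.mem_toFinset.mpr hx)
    refine main v (c.rotate v hvmem) (hc.rotate hvmem) ?_
    intro x hx
    rw [(c.rotate v hvmem).support_eq_cons] at hx
    rcases List.eq_or_mem_of_mem_cons hx with rfl | hx'
    · exact le_refl _
    · exact hvmax' x (List.mem_of_mem_tail ((c.support_rotate v hvmem).mem_iff.mp hx'))
  exact ⟨hconn, hcard, ⟨hconn, hacyc⟩⟩
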